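/- Let P_Ω and P_T be orthogonal projections with ‖P_Ω P_T‖ < 1, and let R := P_{T⊥} ∘ Σ_{k≥1} (P_Ω P_T P_Ω)^k. Then ‖R‖ ≤ (‖P_{Ω⊥} P_T‖ · ‖P_Ω P_T‖) / (1 − ‖P_Ω P_T‖²). -/

import Mathlib

open ContinuousLinearMap

-- (a*b)^(n+1) = a * (b*a)^n * b
private lemma mul_pow_succ {M : Type*} [Monoid M] (a b : M) (n : ℕ) :
    (a * b) ^ (n + 1) = a * (b * a) ^ n * b := by
  induction n with
  | zero => simp
  | succ n ih =>
    rw [pow_succ, ih, pow_succ]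
    simp only [mul_assoc]

set_option maxHeartbeats 1000000 in
theorem opNorm_R_le
    {E : Type*} [NormedAddCommGroup E] [InnerProductSpace ℝ E]
    [FiniteDimensional ℝ E]
    (Ω T : Submodule ℝ E)
    (PΩ PT : E →L[ℝ] E)
    (hPΩ : PΩ = Ω.subtypeL.comp (Ω.orthogonalProjectionOnto))
    (hPT : PT = T.subtypeL.comp (T.orthogonalProjectionOnto))
    (hσ : ‖PΩ.comp PT‖ < 1)
    (R : E →L[ℝ] E)
    (hR : R = (1 - PT).comp (∑' k : ℕ, (PΩ.comp (PT.comp PΩ)) ^ (k + 1))) :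
    ‖R‖ ≤ (‖(1 - PΩ).comp PT‖ * ‖PΩ.comp PT‖) / (1 - ‖PΩ.comp PT‖ ^ 2) := by
  set σ := ‖PΩ.comp PT‖ with hσdef
  set c := ‖(1 - PΩ).comp PT‖ with hcdef
  have hσ0 : 0 ≤ σ := norm_nonneg _
  have hc0 : 0 ≤ c := norm_nonneg _
  -- idempotence
  have hPT2 : PT * PT = PT := by
    ext x
    simp [hPT, ContinuousLinearMap.mul_apply, Submodule.orthogonalProjectionOnto_mem_subspace_eq_self,
      Submodule.starProjection_eq_self_iff]
  have hPΩ2 : PΩ * PΩ = PΩ := by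
    ext x
    simp [hPΩ, ContinuousLinearMap.mul_apply, Submodule.orthogonalProjectionOnto_mem_subspace_eq_self,
      Submodule.starProjection_eq_self_iff]
  -- self-adjointness
  have hPTsa : IsSelfAdjoint PT := by
    rw [hPT]; exact isSelfAdjoint_starProjection T
  have hPΩsa : IsSelfAdjoint PΩ := by
    rw [hPΩ]; exact isSelfAdjoint_starProjection Ω
  -- norm bounds for projections and complements (pointwise)
  have key : ∀ (S : Submodule ℝ E) (x : E),
      ‖(S.subtypeL.comp (S.orthogonalProjectionOnto)) x‖ ≤ ‖x‖ ∧
      ‖(1 - S.subtypeL.comp (S.orthogonalProjectionOnto)) x‖ ≤ ‖x‖ := by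
    intro S x
    have h0 := Submodule.norm_sq_eq_add_norm_sq_projection x S
    have h : ‖x‖ ^ 2 = ‖(S.orthogonalProjectionOnto x : E)‖ ^ 2 + ‖(Sᗮ.orthogonalProjectionOnto x : E)‖ ^ 2 := by
      exact h0
    have h1 : (S.subtypeL.comp (S.orthogonalProjectionOnto)) x = (S.orthogonalProjectionOnto x : E) := rfl
    have h2 : (1 - S.subtypeL.comp (S.orthogonalProjectionOnto)) x = (Sᗮ.orthogonalProjectionOnto x : E) := by
      have hx := Submodule.starProjection_add_starProjection_orthogonal (K := S) x
      have : (1 - S.subtypeL.comp (S.orthogonalProjectionOnto)) x = x - (S.orthogonalProjectionOnto x : E) := by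
        simp [ContinuousLinearMap.sub_apply, h1]
      rw [this]; exact sub_eq_of_eq_add' hx.symm
    constructor
    · rw [h1]
      nlinarith [norm_nonneg ((S.orthogonalProjectionOnto x : E)), norm_nonneg x,
        norm_nonneg ((Sᗮ.orthogonalProjectionOnto x : E)), sq_nonneg ‖(Sᗮ.orthogonalProjectionOnto x : E)‖]
    · rw [h2]
      nlinarith [norm_nonneg ((Sᗮ.orthogonalProjectionOnto x : E)), norm_nonneg x,
        sq_nonneg ‖(S.orthogonalProjectionOnto x : E)‖]
  have hPTc : ‖(1 : E →L[ℝ] E) - PT‖ ≤ 1 := by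
    refine ContinuousLinearMap.opNorm_le_bound _ zero_le_one (fun x => ?_)
    rw [one_mul, hPT]; exact (key T x).2
  have hPΩn : ‖PΩ‖ ≤ 1 := by
    refine ContinuousLinearMap.opNorm_le_bound _ zero_le_one (fun x => ?_)
    rw [one_mul, hPΩ]; exact (key Ω x).1
  -- B, C
  set B := PΩ * PT with hB
  set C := PT * PΩ with hC
  have hCB : ContinuousLinearMap.adjoint B = C := by
    rw [hB, hC]
    show ContinuousLinearMap.adjoint (PΩ.comp PT) = PT * PΩ
    rw [ContinuousLinearMap.adjoint_comp, hPTsa.adjoint_eq, hPΩsa.adjoint_eq]; rfl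
  have hCnorm : ‖C‖ = σ := by
    rw [← hCB, hσdef]
    exact (LinearIsometryEquiv.norm_map _ _)
  have hBnorm : ‖B‖ = σ := rfl
  -- A = B * C
  set A := PΩ.comp (PT.comp PΩ) with hA
  have hABC : A = B * C := by
    rw [hA, hB, hC, mul_assoc PΩ PT (PT * PΩ), ← mul_assoc PT PT PΩ, hPT2]; rfl
  -- key identity: (1-PT) * B = -((1-PT) * ((1-PΩ) * PT))
  have hkey : (1 - PT) * B = -((1 - PT) * ((1 - PΩ) * PT)) := by
    have hadd : (1 - PT) * B + (1 - PT) * ((1 - PΩ) * PT) = 0 := by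
      rw [hB, ← mul_add]
      have hsum : PΩ * PT + (1 - PΩ) * PT = PT := by
        rw [← add_mul, add_sub_cancel, one_mul]
      rw [hsum, sub_mul, one_mul, hPT2, sub_self]
    exact eq_neg_of_add_eq_zero_left hadd
  have hCBle : ‖C * B‖ ≤ σ ^ 2 := by
    calc ‖C * B‖ ≤ ‖C‖ * ‖B‖ := norm_mul_le _ _
      _ = σ ^ 2 := by rw [hCnorm, hBnorm]; ring
  have hCBk : ∀ k : ℕ, ‖(C * B) ^ k‖ ≤ (σ ^ 2) ^ k := by
    intro k
    induction k with
    | zero => simpa [ContinuousLinearMap.one_def] using ContinuousLinearMap.norm_id_le (𝕜 := ℝ) (E := E)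
    | succ n ih =>
      calc ‖(C * B) ^ (n + 1)‖ = ‖(C * B) ^ n * (C * B)‖ := by rw [pow_succ]
        _ ≤ ‖(C * B) ^ n‖ * ‖C * B‖ := norm_mul_le _ _
        _ ≤ (σ ^ 2) ^ n * σ ^ 2 := mul_le_mul ih hCBle (norm_nonneg _) (by positivity)
        _ = (σ ^ 2) ^ (n + 1) := (pow_succ _ _).symm
  have hcc : ‖(1 - PT) * ((1 - PΩ) * PT)‖ ≤ c := by
    calc ‖(1 - PT) * ((1 - PΩ) * PT)‖ ≤ ‖(1 : E →L[ℝ] E) - PT‖ * ‖(1 - PΩ) * PT‖ := norm_mul_le _ _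
      _ ≤ 1 * c := mul_le_mul hPTc le_rfl (norm_nonneg _) zero_le_one
      _ = c := one_mul c
  -- termwise bound
  have hterm : ∀ k : ℕ, ‖(1 - PT) * A ^ (k + 1)‖ ≤ c * σ * (σ ^ 2) ^ k := by
    intro k
    have hfact : (1 - PT) * A ^ (k + 1)
        = -((1 - PT) * ((1 - PΩ) * PT)) * ((C * B) ^ k * C) := by
      rw [hABC, mul_pow_succ, mul_assoc B, ← mul_assoc (1 - PT), hkey]
    rw [hfact]
    calc ‖-((1 - PT) * ((1 - PΩ) * PT)) * ((C * B) ^ k * C)‖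
        ≤ ‖-((1 - PT) * ((1 - PΩ) * PT))‖ * ‖(C * B) ^ k * C‖ := norm_mul_le _ _
      _ ≤ ‖(1 - PT) * ((1 - PΩ) * PT)‖ * (‖(C * B) ^ k‖ * ‖C‖) := by
          rw [norm_neg]; gcongr; exact norm_mul_le _ _
      _ ≤ c * ((σ ^ 2) ^ k * σ) := by
          apply mul_le_mul hcc _ (by positivity) hc0
          exact mul_le_mul (hCBk k) (le_of_eq hCnorm) (norm_nonneg _) (by positivity)
      _ = c * σ * (σ ^ 2) ^ k := by ring
  -- summability
  have hσ2 : σ ^ 2 < 1 := by nlinarith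
  have hsumgeo : Summable (fun k : ℕ => c * σ * (σ ^ 2) ^ k) :=
    (summable_geometric_of_lt_one (by positivity) hσ2).mul_left _
  have hAnorm : ∀ k : ℕ, ‖A ^ (k + 1)‖ ≤ σ ^ 2 * (σ ^ 2) ^ k := by
    intro k
    rw [hABC, mul_pow_succ]
    calc ‖B * (C * B) ^ k * C‖ ≤ ‖B * (C * B) ^ k‖ * ‖C‖ := norm_mul_le _ _
      _ ≤ ‖B‖ * ‖(C * B) ^ k‖ * ‖C‖ := by gcongr; exact norm_mul_le _ _
      _ ≤ σ * (σ ^ 2) ^ k * σ := by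
          rw [hBnorm, hCnorm]
          exact mul_le_mul (mul_le_mul le_rfl (hCBk k) (norm_nonneg _) hσ0) le_rfl hσ0
            (by positivity)
      _ = σ ^ 2 * (σ ^ 2) ^ k := by ring
  have hsumA : Summable (fun k : ℕ => A ^ (k + 1)) := by
    apply Summable.of_norm
    apply Summable.of_nonneg_of_le (fun k => norm_nonneg _) hAnorm
    exact (summable_geometric_of_lt_one (by positivity) hσ2).mul_left _
  -- pull composition into tsum
  have hRsum : R = ∑' k : ℕ, (1 - PT) * A ^ (k + 1) := by
    rw [hR]
    exact (ContinuousLinearMap.compL ℝ E E E (1 - PT)).map_tsum hsumA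
  have hsumLHS : Summable (fun k : ℕ => (1 - PT) * A ^ (k + 1)) := hsumA.mul_left _
  rw [hRsum]
  calc ‖∑' k : ℕ, (1 - PT) * A ^ (k + 1)‖ ≤ ∑' k : ℕ, ‖(1 - PT) * A ^ (k + 1)‖ :=
        norm_tsum_le_tsum_norm (hsumLHS.norm)
    _ ≤ ∑' k : ℕ, c * σ * (σ ^ 2) ^ k := by
        apply Summable.tsum_le_tsum hterm hsumLHS.norm hsumgeo
    _ = c * σ * (1 - σ ^ 2)⁻¹ := by
        rw [tsum_mul_left, tsum_geometric_of_lt_one (by positivity) hσ2]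
    _ = c * σ / (1 - σ ^ 2) := by rw [div_eq_mul_inv]
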